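/- Positivity of ∂λ₂/∂w₁ (core claim of Lemma 3.2). Let z = (z₁, z₂) ∈ Ω and suppose w₁, w₂ : Ω → ℝ are differentiable at z with ∇w₁(z) · r₁(z) = 0, ∇w₂(z) · r₂(z) = 0, ∂w₁/∂z₁(z) > 0 and ∂w₂/∂z₁(z) < 0. Then the gradient of λ₂ at z decomposes as ∇λ₂(z) = a ∇w₁(z) + b ∇w₂(z) for some real numbers a, b with a = (z₂ + √(z₂² + 4z₁)) / ( ∂w₁/∂z₁(z) · (z₂² + 4z₁) ); in particular a > 0. -/

import Mathlib

/-- The half-plane `Ω = {(z₁,z₂) ∈ ℝ² : z₁ > 0}`. -/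
def Omega : Set (ℝ × ℝ) := {z : ℝ × ℝ | 0 < z.1}

/-- The eigenvalue `λ₁(z₁,z₂) = (z₂ − √(z₂² + 4z₁))/2` of `[[z₂, z₁],[1,0]]`. -/
noncomputable def lam1 (z : ℝ × ℝ) : ℝ := (z.2 - Real.sqrt (z.2 ^ 2 + 4 * z.1)) / 2

/-- The eigenvalue `λ₂(z₁,z₂) = (z₂ + √(z₂² + 4z₁))/2` of `[[z₂, z₁],[1,0]]`. -/
noncomputable def lam2 (z : ℝ × ℝ) : ℝ := (z.2 + Real.sqrt (z.2 ^ 2 + 4 * z.1)) / 2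

/-- **Core claim of Lemma 3.2** (Positivity of `∂λ₂/∂w₁`). In Riemann-invariant coordinates,
`∇λ₂ = a ∇w₁ + b ∇w₂` with
`a = (z₂ + √(z₂² + 4z₁)) / (∂w₁/∂z₁ · (z₂² + 4z₁)) > 0`. -/
theorem dlam2_dw1_pos
    (z : ℝ × ℝ) (hz : z ∈ Omega) (w₁ w₂ : ℝ × ℝ → ℝ)
    (hw₁ : DifferentiableAt ℝ w₁ z) (hw₂ : DifferentiableAt ℝ w₂ z)
    (hr₁ : fderiv ℝ w₁ z (lam1 z, 1) = 0)
    (hr₂ : fderiv ℝ w₂ z (lam2 z, 1) = 0)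
    (hpos : 0 < fderiv ℝ w₁ z ((1 : ℝ), (0 : ℝ)))
    (hneg : fderiv ℝ w₂ z ((1 : ℝ), (0 : ℝ)) < 0) :
    ∃ a b : ℝ,
      fderiv ℝ lam2 z = a • fderiv ℝ w₁ z + b • fderiv ℝ w₂ z ∧
      a = (z.2 + Real.sqrt (z.2 ^ 2 + 4 * z.1)) /
        (fderiv ℝ w₁ z ((1 : ℝ), (0 : ℝ)) * (z.2 ^ 2 + 4 * z.1)) ∧
      0 < a := by
  have hq : (0:ℝ) < z.2 ^ 2 + 4 * z.1 := by
    have h1 : 0 < z.1 := hz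
    nlinarith [sq_nonneg z.2]
  set s : ℝ := Real.sqrt (z.2 ^ 2 + 4 * z.1) with hs_def
  have hs0 : 0 < s := Real.sqrt_pos.mpr hq
  have hs2 : s ^ 2 = z.2 ^ 2 + 4 * z.1 := Real.sq_sqrt hq.le
  -- derivative of lam2
  have h1 : HasFDerivAt (fun p : ℝ × ℝ => p.1)
      (ContinuousLinearMap.fst ℝ ℝ ℝ) z := hasFDerivAt_fst
  have h2 : HasFDerivAt (fun p : ℝ × ℝ => p.2)
      (ContinuousLinearMap.snd ℝ ℝ ℝ) z := hasFDerivAt_snd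
  have hg : HasFDerivAt (fun p : ℝ × ℝ => p.2 ^ 2 + 4 * p.1)
      (((2 * z.2) • ContinuousLinearMap.snd ℝ ℝ ℝ) +
        ((4:ℝ) • ContinuousLinearMap.fst ℝ ℝ ℝ)) z := by
    have h := (h2.mul h2).add (h1.const_mul 4)
    have heqf : (fun p : ℝ × ℝ => p.2 * p.2 + 4 * p.1)
        = (fun p : ℝ × ℝ => p.2 ^ 2 + 4 * p.1) := by funext p; ring
    change HasFDerivAt (fun p : ℝ × ℝ => p.2 * p.2 + 4 * p.1) _ z at h
    rw [heqf] at h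
    refine h.congr_fderiv ?_
    refine ContinuousLinearMap.ext fun v => ?_
    simp [smul_eq_mul]
    ring
  have hsqrt : HasDerivAt Real.sqrt (1 / (2 * s)) (z.2 ^ 2 + 4 * z.1) :=
    Real.hasDerivAt_sqrt hq.ne'
  have hcomp : HasFDerivAt (fun p : ℝ × ℝ => Real.sqrt (p.2 ^ 2 + 4 * p.1))
      ((1 / (2 * s)) • (((2 * z.2) • ContinuousLinearMap.snd ℝ ℝ ℝ) +
        ((4:ℝ) • ContinuousLinearMap.fst ℝ ℝ ℝ))) z :=
    hsqrt.comp_hasFDerivAt z hg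
  have hlam : HasFDerivAt lam2
      (((1:ℝ)/2) • (ContinuousLinearMap.snd ℝ ℝ ℝ +
        (1 / (2 * s)) • (((2 * z.2) • ContinuousLinearMap.snd ℝ ℝ ℝ) +
          ((4:ℝ) • ContinuousLinearMap.fst ℝ ℝ ℝ)))) z := by
    have h := (h2.add hcomp).const_smul ((1:ℝ)/2)
    have heq : (fun p : ℝ × ℝ => ((1:ℝ)/2) • (p.2 + Real.sqrt (p.2 ^ 2 + 4 * p.1)))
        = lam2 := by
      funext p
      simp [lam2, smul_eq_mul]
      ring
    change HasFDerivAt (fun p : ℝ × ℝ => ((1:ℝ)/2) • (p.2 + Real.sqrt (p.2 ^ 2 + 4 * p.1))) _ z at h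
    rwa [heq] at h
  have hfd : fderiv ℝ lam2 z =
      ((1:ℝ)/2) • (ContinuousLinearMap.snd ℝ ℝ ℝ +
        (1 / (2 * s)) • (((2 * z.2) • ContinuousLinearMap.snd ℝ ℝ ℝ) +
          ((4:ℝ) • ContinuousLinearMap.fst ℝ ℝ ℝ))) := hlam.fderiv
  -- notation for partials of w₁, w₂
  set α₁ : ℝ := fderiv ℝ w₁ z ((1:ℝ), (0:ℝ)) with hα₁
  set α₂ : ℝ := fderiv ℝ w₂ z ((1:ℝ), (0:ℝ)) with hα₂
  set β₁ : ℝ := fderiv ℝ w₁ z ((0:ℝ), (1:ℝ)) with hβ₁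
  set β₂ : ℝ := fderiv ℝ w₂ z ((0:ℝ), (1:ℝ)) with hβ₂
  have e1 : lam1 z * α₁ + β₁ = 0 := by
    have : ((lam1 z, (1:ℝ)) : ℝ × ℝ) = lam1 z • ((1:ℝ), (0:ℝ)) + ((0:ℝ), (1:ℝ)) := by
      simp
    rw [this, map_add, map_smul] at hr₁
    simpa [smul_eq_mul] using hr₁
  have e2 : lam2 z * α₂ + β₂ = 0 := by
    have : ((lam2 z, (1:ℝ)) : ℝ × ℝ) = lam2 z • ((1:ℝ), (0:ℝ)) + ((0:ℝ), (1:ℝ)) := by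
      simp
    rw [this, map_add, map_smul] at hr₂
    simpa [smul_eq_mul] using hr₂
  have hl1 : lam1 z = (z.2 - s) / 2 := rfl
  have hl2 : lam2 z = (z.2 + s) / 2 := rfl
  refine ⟨(z.2 + s) / (α₁ * (z.2 ^ 2 + 4 * z.1)),
      -z.2 / (α₂ * (z.2 ^ 2 + 4 * z.1)), ?_, rfl, ?_⟩
  · refine ContinuousLinearMap.ext fun v => ?_
    obtain ⟨x, y⟩ := v
    have hv : ((x, y) : ℝ × ℝ) = x • ((1:ℝ), (0:ℝ)) + y • ((0:ℝ), (1:ℝ)) := by simp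
    rw [hfd]
    simp only [ContinuousLinearMap.add_apply, ContinuousLinearMap.smul_apply,
      ContinuousLinearMap.coe_fst', ContinuousLinearMap.coe_snd', smul_eq_mul]
    rw [hv, map_add, map_smul, map_smul, map_add, map_smul, map_smul]
    simp only [smul_eq_mul, ← hα₁, ← hα₂, ← hβ₁, ← hβ₂]
    have hb1 : β₁ = -(lam1 z * α₁) := by linarith
    have hb2 : β₂ = -(lam2 z * α₂) := by linarith
    rw [hb1, hb2, hl1, hl2, ← hs2]
    have hsne : s ≠ 0 := hs0.ne'
    have hα₁ne : α₁ ≠ 0 := hpos.ne'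
    have hα₂ne : α₂ ≠ 0 := hneg.ne
    field_simp
    ring
  · have hnum : 0 < z.2 + s := by nlinarith [hs2, hs0, sq_nonneg (s + z.2), hz.out, mul_pos hs0 hs0]
    have hden : 0 < α₁ * (z.2 ^ 2 + 4 * z.1) := mul_pos hpos hq
    exact div_pos hnum hden
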